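/- With the setup of the IW-ELBO L_K(q) = E_{z_1,...,z_K iid ~ q}[ log((1/K) Σ_{i=1}^K w(z_i)) ] where w(z) = p(z)/q(z), the sequence K ↦ L_K(q) is nondecreasing: L_{K+1}(q) ≥ L_K(q) for all K ≥ 1. -/

import Mathlib

open MeasureTheory

/-- The importance-weighted ELBO with `K` samples, for importance weight function `w`
and variational law `μ`. -/
noncomputable def IWELBO {d : ℕ} (μ : Measure (Fin d → ℝ)) [SigmaFinite μ]
    (w : (Fin d → ℝ) → ℝ) (K : ℕ) : ℝ :=
  ∫ zs : Fin K → (Fin d → ℝ),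
    Real.log ((K : ℝ)⁻¹ * ∑ i, w (zs i)) ∂(Measure.pi fun _ => μ)

theorem stmt_10 {d : ℕ} (K : ℕ) (hK : 1 ≤ K)
    (p q : (Fin d → ℝ) → ℝ) (pbar : ℝ) (hpbar : 0 < pbar)
    (hp : ∀ z, 0 < p z) (hpint : Integrable p) (hptot : ∫ z, p z = pbar)
    (hq : ∀ z, 0 < q z) (hqmeas : Measurable q) (hqint : Integrable q)
    (hq1 : ∫ z, q z = 1)
    (w : (Fin d → ℝ) → ℝ) (hw : ∀ z, w z = p z / q z)
    (μ : Measure (Fin d → ℝ)) [IsProbabilityMeasure μ]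
    (hμ : μ = volume.withDensity (fun z => ENNReal.ofReal (q z)))
    (hlogint : Integrable (fun z => |Real.log (w z)|) μ)
    (hwint : Integrable w μ)
    (hintK : Integrable
      (fun zs : Fin K → (Fin d → ℝ) => Real.log ((K : ℝ)⁻¹ * ∑ i, w (zs i)))
      (Measure.pi fun _ => μ))
    (hintK1 : Integrable
      (fun zs : Fin (K + 1) → (Fin d → ℝ) => Real.log (((K + 1 : ℕ) : ℝ)⁻¹ * ∑ i, w (zs i)))
      (Measure.pi fun _ => μ)) :
    IWELBO μ w K ≤ IWELBO μ w (K + 1) := by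
  classical
  set ν : Measure (Fin K → (Fin d → ℝ)) := Measure.pi fun _ => μ with hν
  set νK1 : Measure (Fin (K + 1) → (Fin d → ℝ)) := Measure.pi fun _ => μ with hνK1
  set F : (Fin K → (Fin d → ℝ)) → ℝ := fun ys => Real.log ((K : ℝ)⁻¹ * ∑ i, w (ys i)) with hF
  have hwpos : ∀ z, 0 < w z := fun z => by
    rw [hw]; exact div_pos (hp z) (hq z)
  have hKpos : (0 : ℝ) < (K : ℝ) := by exact_mod_cast hK
  have hK1pos : (0 : ℝ) < ((K + 1 : ℕ) : ℝ) := by positivity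
  haveI : Nonempty (Fin K) := ⟨⟨0, hK⟩⟩
  -- the marginal of the (K+1)-product on K coordinates
  have hmap : Measure.map Prod.snd (μ.prod ν) = ν := by
    rw [Measure.map_snd_prod, measure_univ, one_smul]
  have hFm : AEStronglyMeasurable F (Measure.map Prod.snd (μ.prod ν)) := by
    rw [hmap]; exact hintK.1
  have hFsnd_int : Integrable (fun pr : (Fin d → ℝ) × (Fin K → (Fin d → ℝ)) => F pr.2) (μ.prod ν) := by
    have := (integrable_map_measure hFm measurable_snd.aemeasurable).mp (by rwa [hmap])
    exact this
  have hFsnd_int' : ∫ pr, F pr.2 ∂(μ.prod ν) = ∫ ys, F ys ∂ν := by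
    have := integral_map (μ := μ.prod ν) (φ := Prod.snd) measurable_snd.aemeasurable
      (f := F) hFm
    rw [hmap] at this
    exact this.symm
  -- for each j, the function of the coordinates other than j
  set g : Fin (K + 1) → (Fin (K + 1) → (Fin d → ℝ)) → ℝ :=
    fun j zs => F (fun i => zs (j.succAbove i)) with hg
  have hmp : ∀ j : Fin (K + 1),
      MeasurePreserving (MeasurableEquiv.piFinSuccAbove (fun _ => (Fin d → ℝ)) j) νK1 (μ.prod ν) :=
    fun j => measurePreserving_piFinSuccAbove (fun _ => μ) j
  have hgeq : ∀ j zs, g j zs =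
      (fun pr : (Fin d → ℝ) × (Fin K → (Fin d → ℝ)) => F pr.2) ((MeasurableEquiv.piFinSuccAbove (fun _ => (Fin d → ℝ)) j) zs) :=
    fun j zs => rfl
  have hg_int : ∀ j, Integrable (g j) νK1 := by
    intro j
    have := ((hmp j).integrable_comp hFsnd_int.1).mpr hFsnd_int
    exact this
  have hg_integral : ∀ j, ∫ zs, g j zs ∂νK1 = ∫ ys, F ys ∂ν := by
    intro j
    have := MeasurePreserving.integral_comp (hmp j)
      (MeasurableEquiv.piFinSuccAbove (fun _ => (Fin d → ℝ)) j).measurableEmbedding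
      (fun pr : (Fin d → ℝ) × (Fin K → (Fin d → ℝ)) => F pr.2)
    rw [← hFsnd_int']
    exact this
  -- pointwise Jensen inequality
  have key : ∀ zs : Fin (K + 1) → (Fin d → ℝ),
      ((K + 1 : ℕ) : ℝ)⁻¹ * ∑ j : Fin (K + 1), g j zs ≤
        Real.log (((K + 1 : ℕ) : ℝ)⁻¹ * ∑ i, w (zs i)) := by
    intro zs
    set a : Fin (K + 1) → ℝ := fun j => (K : ℝ)⁻¹ * ∑ i : Fin K, w (zs (j.succAbove i)) with ha
    have hapos : ∀ j, 0 < a j := by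
      intro j
      exact mul_pos (inv_pos.mpr hKpos)
        (Finset.sum_pos (fun i _ => hwpos _) Finset.univ_nonempty)
    have hsum_a : ∑ j, a j = ∑ i, w (zs i) := by
      have hsub : ∀ j : Fin (K + 1),
          ∑ i : Fin K, w (zs (j.succAbove i)) = (∑ i, w (zs i)) - w (zs j) := by
        intro j
        have := Fin.sum_univ_succAbove (fun i => w (zs i)) j
        linarith
      calc ∑ j, a j = ∑ j : Fin (K + 1), (K : ℝ)⁻¹ * ((∑ i, w (zs i)) - w (zs j)) := by
            simp only [ha, hsub]
        _ = (K : ℝ)⁻¹ * (((K + 1 : ℕ) : ℝ) * (∑ i, w (zs i)) - ∑ i, w (zs i)) := by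
            rw [← Finset.mul_sum, Finset.sum_sub_distrib, Finset.sum_const,
              Finset.card_univ, Fintype.card_fin]
            push_cast
            ring
        _ = ∑ i, w (zs i) := by
            push_cast
            field_simp
            ring
    have jensen := (strictConcaveOn_log_Ioi.concaveOn).le_map_sum
      (t := Finset.univ) (w := fun _ : Fin (K + 1) => ((K + 1 : ℕ) : ℝ)⁻¹) (p := a)
      (fun i _ => by positivity)
      (by rw [Finset.sum_const, Finset.card_univ, Fintype.card_fin, nsmul_eq_mul]
          field_simp)
      (fun i _ => Set.mem_Ioi.mpr (hapos i))
    have hL : ∑ i : Fin (K + 1), ((K + 1 : ℕ) : ℝ)⁻¹ • Real.log (a i) =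
        ((K + 1 : ℕ) : ℝ)⁻¹ * ∑ j, g j zs := by
      simp only [smul_eq_mul, ← Finset.mul_sum]
      rfl
    have hR : ∑ i : Fin (K + 1), ((K + 1 : ℕ) : ℝ)⁻¹ • a i =
        ((K + 1 : ℕ) : ℝ)⁻¹ * ∑ i, w (zs i) := by
      simp only [smul_eq_mul, ← Finset.mul_sum, hsum_a]
    rw [hL, hR] at jensen
    exact jensen
  -- integrate
  have hG_int : Integrable (fun zs => ((K + 1 : ℕ) : ℝ)⁻¹ * ∑ j, g j zs) νK1 :=
    (integrable_finset_sum _ (fun j _ => hg_int j)).const_mul _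
  have hmono : ∫ zs, ((K + 1 : ℕ) : ℝ)⁻¹ * ∑ j, g j zs ∂νK1 ≤
      ∫ zs, Real.log (((K + 1 : ℕ) : ℝ)⁻¹ * ∑ i, w (zs i)) ∂νK1 :=
    integral_mono hG_int hintK1 key
  have hGval : ∫ zs, ((K + 1 : ℕ) : ℝ)⁻¹ * ∑ j, g j zs ∂νK1 = ∫ ys, F ys ∂ν := by
    rw [integral_const_mul, integral_finset_sum _ (fun j _ => hg_int j)]
    simp only [hg_integral, Finset.sum_const, Finset.card_univ, Fintype.card_fin, nsmul_eq_mul]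
    field_simp
  rw [IWELBO, IWELBO]
  calc ∫ zs : Fin K → (Fin d → ℝ), Real.log ((K : ℝ)⁻¹ * ∑ i, w (zs i)) ∂ν = ∫ ys, F ys ∂ν := rfl
    _ = ∫ zs, ((K + 1 : ℕ) : ℝ)⁻¹ * ∑ j, g j zs ∂νK1 := hGval.symm
    _ ≤ ∫ zs, Real.log (((K + 1 : ℕ) : ℝ)⁻¹ * ∑ i, w (zs i)) ∂νK1 := hmono
    _ = ∫ zs : Fin (K+1) → (Fin d → ℝ), Real.log (((K + 1 : ℕ) : ℝ)⁻¹ * ∑ i, w (zs i)) ∂νK1 := rfl
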